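/- On the U_q(sl_2)-module V_n with canonical basis v_0, ..., v_n, let ⟨·,·⟩ be the semi-linear form determined by ⟨v_k, v_l⟩ = δ_{k,l} q^{k(n-k)} [n,k], where [n,k] = [n]!/([k]![n-k]!) is the balanced Gaussian binomial. Then ⟨xu, v⟩ = ⟨u, τ(x)v⟩ holds for all x ∈ U_q(sl_2) and u, v ∈ V_n, where τ is the antilinear anti-automorphism with τ(E) = qFK^{-1}, τ(F) = qEK, τ(K) = K^{-1}. (It suffices to verify this for x ∈ {E, F, K, K^{-1}} on basis vectors.) -/

import Mathlib

set_option synthInstance.maxHeartbeats 1000000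
set_option maxHeartbeats 1000000

noncomputable section

/-- The ground field `ℂ(q)`. -/
abbrev K : Type := RatFunc ℂ

/-- The indeterminate `q ∈ ℂ(q)`. -/
def q : K := RatFunc.X

/-- The quantum integer `[a] = (qᵃ - q⁻ᵃ)/(q - q⁻¹)`. -/
def qint (a : ℤ) : K := (q ^ a - q ^ (-a)) / (q - q⁻¹)

/-- The quantum factorial `[a]! = [a][a-1]⋯[1]`. -/
def qfact : ℕ → K
  | 0 => 1
  | a + 1 => qint (a + 1) * qfact a

/-- The balanced Gaussian binomial coefficient `[n,k] = [n]!/([k]![n-k]!)`. -/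
def qbinom (n k : ℕ) : K := qfact n / (qfact k * qfact (n - k))

/-- The matrix of `E` on `V_n` in the canonical basis: `E v_k = [k+1] v_{k+1}`. -/
def Emat (n : ℕ) : Matrix (Fin (n + 1)) (Fin (n + 1)) K :=
  Matrix.of fun i j => if (i : ℕ) = (j : ℕ) + 1 then qint ((j : ℕ) + 1) else 0

/-- The matrix of `F` on `V_n` in the canonical basis: `F v_k = [n-k+1] v_{k-1}`. -/
def Fmat (n : ℕ) : Matrix (Fin (n + 1)) (Fin (n + 1)) K :=
  Matrix.of fun i j => if (i : ℕ) + 1 = (j : ℕ) then qint ((n : ℤ) - (j : ℕ) + 1) else 0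

/-- The matrix of `K` on `V_n`: `K v_k = q^{2k-n} v_k`. -/
def Kmat (n : ℕ) : Matrix (Fin (n + 1)) (Fin (n + 1)) K :=
  Matrix.diagonal fun k => q ^ (2 * (k : ℤ) - (n : ℤ))

/-- The matrix of `K⁻¹` on `V_n`: `K⁻¹ v_k = q^{n-2k} v_k`. -/
def Kinvmat (n : ℕ) : Matrix (Fin (n + 1)) (Fin (n + 1)) K :=
  Matrix.diagonal fun k => q ^ ((n : ℤ) - 2 * (k : ℤ))

/-- The semi-linear form on `V_n` with `⟨v_k, v_l⟩ = δ_{k,l} q^{k(n-k)} [n,k]`,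
antilinear in the first variable (via the bar involution `q ↦ q⁻¹`). -/
def sform (n : ℕ) (bar : K ≃+* K) (u v : Fin (n + 1) → K) : K :=
  ∑ k : Fin (n + 1),
    bar (u k) * (q ^ ((k : ℕ) * (n - (k : ℕ))) * qbinom n (k : ℕ) * v k)

/- ### Auxiliary lemmas -/

lemma q_ne : (q : K) ≠ 0 := RatFunc.X_ne_zero

lemma qpow_ne_one (m : ℕ) (hm : m ≠ 0) : (q : K) ^ m ≠ 1 := by
  intro h
  have h1 : (q:K) ^ m = algebraMap (Polynomial ℂ) K (Polynomial.X ^ m) := by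
    rw [map_pow]; rfl
  have h2 : (1:K) = algebraMap (Polynomial ℂ) K 1 := by rw [map_one]
  rw [h1, h2] at h
  have h3 : (Polynomial.X : Polynomial ℂ) ^ m = 1 := RatFunc.algebraMap_injective ℂ h
  have := congrArg Polynomial.natDegree h3
  simp [Polynomial.natDegree_X_pow] at this
  exact hm this

lemma qden_ne : (q : K) - q⁻¹ ≠ 0 := by
  rw [sub_ne_zero]
  intro h
  have : (q:K) ^ 2 = 1 := by
    have := congrArg (· * q) h
    simpa [inv_mul_cancel₀ q_ne, sq] using this
  exact qpow_ne_one 2 (by norm_num) this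

lemma qint_succ_ne (m : ℕ) : qint (m + 1) ≠ 0 := by
  unfold qint
  apply div_ne_zero _ qden_ne
  rw [sub_ne_zero]
  intro h
  have h2 : (q:K) ^ ((m:ℤ)+1) * q ^ ((m:ℤ)+1) = 1 := by
    nth_rewrite 2 [h]
    rw [← zpow_add₀ q_ne, show ((m:ℤ)+1 + -((m:ℤ)+1)) = 0 by ring, zpow_zero]
  rw [← zpow_add₀ q_ne] at h2
  have : (q:K) ^ (2*(m+1)) = 1 := by
    rw [← zpow_natCast q (2*(m+1))]
    convert h2 using 2
    push_cast; ring
  exact qpow_ne_one _ (by omega) this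

lemma qfact_ne : ∀ m, qfact m ≠ 0
  | 0 => one_ne_zero
  | m + 1 => mul_ne_zero (by exact_mod_cast qint_succ_ne m) (qfact_ne m)

lemma bar_zpow (bar : K ≃+* K) (hbarq : bar q = q⁻¹) (m : ℤ) : bar (q ^ m) = q ^ (-m) := by
  rw [map_zpow₀, hbarq, ← zpow_neg_one, ← zpow_mul]
  ring_nf

lemma bar_qint (bar : K ≃+* K) (hbarq : bar q = q⁻¹) (a : ℤ) : bar (qint a) = qint a := by
  unfold qint
  rw [map_div₀, map_sub, map_sub, bar_zpow bar hbarq, bar_zpow bar hbarq,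
    hbarq, map_inv₀, hbarq, inv_inv, neg_neg]
  rw [show (q:K) ^ (-a) - q ^ a = -(q ^ a - q ^ (-a)) by ring,
    show (q:K)⁻¹ - q = -(q - q⁻¹) by ring, neg_div_neg_eq (q ^ a - q ^ (-a)) (q - q⁻¹)]

lemma bar_qfact (bar : K ≃+* K) (hbarq : bar q = q⁻¹) (m : ℕ) : bar (qfact m) = qfact m := by
  induction m with
  | zero => simp [qfact]
  | succ a ih => rw [qfact, map_mul, ih, bar_qint bar hbarq]

lemma bar_qbinom (bar : K ≃+* K) (hbarq : bar q = q⁻¹) (n k : ℕ) :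
    bar (qbinom n k) = qbinom n k := by
  unfold qbinom
  rw [map_div₀, map_mul, bar_qfact bar hbarq, bar_qfact bar hbarq, bar_qfact bar hbarq]

lemma qbinom_rec (n j : ℕ) (h : j < n) :
    qint (j + 1) * qbinom n (j + 1) = qint ((n : ℤ) - j) * qbinom n j := by
  have h1 : n - j = (n - (j+1)) + 1 := by omega
  have h2 : ((n:ℤ) - j) = ((n - (j+1) : ℕ) : ℤ) + 1 := by
    have : ((n - (j+1) : ℕ) : ℤ) = (n:ℤ) - (j+1) := by
      push_cast [Nat.cast_sub (by omega : j+1 ≤ n)]; ring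
    rw [this]; ring
  unfold qbinom
  rw [h1, h2, qfact, qfact]
  have e1 := qint_succ_ne j
  have e2 := qint_succ_ne (n - (j+1))
  have f1 := qfact_ne j
  have f2 := qfact_ne (n - (j+1))
  push_cast at e1 e2 ⊢
  field_simp

lemma pow_id1 (n j : ℕ) (h : j < n) :
    (q:K) ^ ((j+1) * (n - (j+1))) = q ^ (j*(n-j)) * (q * q ^ ((n:ℤ) - 2*(j:ℤ) - 2)) := by
  have c1 : ((n - (j+1) : ℕ) : ℤ) = (n:ℤ) - ((j:ℤ)+1) := by omega
  have c2 : ((n - j : ℕ) : ℤ) = (n:ℤ) - j := by omega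
  rw [show (q:K) * q ^ ((n:ℤ) - 2*(j:ℤ) - 2) = q ^ (1 + ((n:ℤ) - 2*(j:ℤ) - 2)) by
      rw [zpow_add₀ q_ne, zpow_one],
    ← zpow_natCast q ((j+1)*(n-(j+1))), ← zpow_natCast q (j*(n-j)), ← zpow_add₀ q_ne]
  congr 1
  push_cast
  rw [c1, c2]
  ring

lemma pow_id2 (n j : ℕ) (h : j < n) :
    (q:K) ^ (j*(n-j)) = q ^ ((j+1) * (n - (j+1))) * (q * q ^ (2*(j:ℤ) - (n:ℤ))) := by
  rw [pow_id1 n j h, show (q:K) * q ^ (2*(j:ℤ) - (n:ℤ)) = q ^ (1 + (2*(j:ℤ) - (n:ℤ))) by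
      rw [zpow_add₀ q_ne, zpow_one],
    show (q:K) * q ^ ((n:ℤ) - 2*(j:ℤ) - 2) = q ^ (1 + ((n:ℤ) - 2*(j:ℤ) - 2)) by
      rw [zpow_add₀ q_ne, zpow_one],
    mul_assoc, ← zpow_add₀ q_ne,
    show (1 + ((n:ℤ) - 2*(j:ℤ) - 2) + (1 + (2*(j:ℤ) - (n:ℤ)))) = 0 by ring, zpow_zero,
    mul_one]

lemma sform_adj (n : ℕ) (bar : K ≃+* K) (A B : Matrix (Fin (n+1)) (Fin (n+1)) K)
    (h : ∀ j k : Fin (n+1), bar (A k j) * (q ^ ((k:ℕ) * (n - (k:ℕ))) * qbinom n (k:ℕ))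
        = q ^ ((j:ℕ) * (n - (j:ℕ))) * qbinom n (j:ℕ) * B j k)
    (u v : Fin (n+1) → K) :
    sform n bar (A.mulVec u) v = sform n bar u (B.mulVec v) := by
  unfold sform Matrix.mulVec dotProduct
  simp only [map_sum, map_mul, Finset.sum_mul, Finset.mul_sum]
  rw [Finset.sum_comm]
  refine Finset.sum_congr rfl fun j _ => Finset.sum_congr rfl fun k _ => ?_
  have hjk := h j k
  calc bar (A k j) * bar (u j) * (q ^ ((k:ℕ) * (n - (k:ℕ))) * qbinom n (k:ℕ) * v k)
      = bar (u j) * v k * (bar (A k j) * (q ^ ((k:ℕ) * (n - (k:ℕ))) * qbinom n (k:ℕ))) := by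
        ring
    _ = bar (u j) * v k * (q ^ ((j:ℕ) * (n - (j:ℕ))) * qbinom n (j:ℕ) * B j k) := by rw [hjk]
    _ = bar (u j) * (q ^ ((j:ℕ) * (n - (j:ℕ))) * qbinom n (j:ℕ) * (B j k * v k)) := by ring

/-- On `V_n`, the semi-linear form with `⟨v_k, v_l⟩ = δ_{k,l} q^{k(n-k)} [n,k]` satisfies
`⟨xu, v⟩ = ⟨u, τ(x)v⟩` for the generators `x ∈ {E, F, K, K⁻¹}` of `U_q(sl₂)`, where
`τ(E) = qFK⁻¹`, `τ(F) = qEK`, `τ(K) = K⁻¹`, `τ(K⁻¹) = K`. -/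
theorem sform_tau_adjoint (n : ℕ) (bar : K ≃+* K) (hbarq : bar q = q⁻¹)
    (hbarC : ∀ c : ℂ, bar (algebraMap ℂ K c) = algebraMap ℂ K c) :
    ∀ u v : Fin (n + 1) → K,
      sform n bar ((Emat n).mulVec u) v
        = sform n bar u ((q • (Fmat n * Kinvmat n)).mulVec v) ∧
      sform n bar ((Fmat n).mulVec u) v
        = sform n bar u ((q • (Emat n * Kmat n)).mulVec v) ∧
      sform n bar ((Kmat n).mulVec u) v = sform n bar u ((Kinvmat n).mulVec v) ∧
      sform n bar ((Kinvmat n).mulVec u) v = sform n bar u ((Kmat n).mulVec v) := by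
  intro u v
  refine ⟨?_, ?_, ?_, ?_⟩
  · -- E case
    apply sform_adj
    intro j k
    by_cases hc : (k:ℕ) = (j:ℕ) + 1
    · have hj : (j:ℕ) < n := by have := k.isLt; omega
      have hA : Emat n k j = qint (((j:ℕ):ℤ) + 1) := by
        simp only [Emat, Matrix.of_apply]; rw [if_pos hc]
      have hB : (q • (Fmat n * Kinvmat n)) j k
          = q * (qint ((n:ℤ) - (j:ℕ)) * q ^ ((n:ℤ) - 2*((j:ℕ):ℤ) - 2)) := by
        simp only [Matrix.smul_apply, Matrix.mul_diagonal, Fmat, Kinvmat, Matrix.of_apply,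
          smul_eq_mul]
        rw [if_pos hc.symm,
          show ((n:ℤ) - ((k:ℕ):ℤ) + 1) = (n:ℤ) - ((j:ℕ):ℤ) by omega,
          show ((n:ℤ) - 2*((k:ℕ):ℤ)) = (n:ℤ) - 2*((j:ℕ):ℤ) - 2 by omega]
      rw [hA, hB, bar_qint bar hbarq, show (k:ℕ) = (j:ℕ) + 1 from hc]
      have key := qbinom_rec n j hj
      calc qint (((j:ℕ):ℤ) + 1) * (q ^ (((j:ℕ)+1) * (n - ((j:ℕ)+1))) * qbinom n ((j:ℕ)+1))
          = (qint (((j:ℕ):ℤ) + 1) * qbinom n ((j:ℕ)+1)) * q ^ (((j:ℕ)+1) * (n - ((j:ℕ)+1))) := by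
            ring
        _ = (qint ((n:ℤ) - (j:ℕ)) * qbinom n (j:ℕ)) * q ^ (((j:ℕ)+1) * (n - ((j:ℕ)+1))) := by
            rw [key]
        _ = q ^ ((j:ℕ) * (n - (j:ℕ))) * qbinom n (j:ℕ)
              * (q * (qint ((n:ℤ) - (j:ℕ)) * q ^ ((n:ℤ) - 2*((j:ℕ):ℤ) - 2))) := by
            rw [pow_id1 n j hj]; ring
    · have hB0 : (q • (Fmat n * Kinvmat n)) j k = 0 := by
        simp only [Matrix.smul_apply, Matrix.mul_diagonal, Fmat, Kinvmat, Matrix.of_apply,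
          smul_eq_mul]
        rw [if_neg (fun h : (j:ℕ) + 1 = (k:ℕ) => hc h.symm)]
        ring
      rw [hB0]
      simp [Emat, if_neg hc]
  · -- F case
    apply sform_adj
    intro j k
    by_cases hc : (k:ℕ) + 1 = (j:ℕ)
    · have hk : (k:ℕ) < n := by have := j.isLt; omega
      have hA : Fmat n k j = qint ((n:ℤ) - (k:ℕ)) := by
        simp only [Fmat, Matrix.of_apply]
        rw [if_pos hc, show ((n:ℤ) - ((j:ℕ):ℤ) + 1) = (n:ℤ) - ((k:ℕ):ℤ) by omega]
      have hB : (q • (Emat n * Kmat n)) j k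
          = q * (qint (((k:ℕ):ℤ) + 1) * q ^ (2*((k:ℕ):ℤ) - (n:ℤ))) := by
        simp only [Matrix.smul_apply, Matrix.mul_diagonal, Emat, Kmat, Matrix.of_apply,
          smul_eq_mul]
        rw [if_pos hc.symm]
      rw [hA, hB, bar_qint bar hbarq, show (j:ℕ) = (k:ℕ) + 1 from hc.symm]
      have key := qbinom_rec n k hk
      calc qint ((n:ℤ) - (k:ℕ)) * (q ^ ((k:ℕ) * (n - (k:ℕ))) * qbinom n (k:ℕ))
          = (qint ((n:ℤ) - (k:ℕ)) * qbinom n (k:ℕ)) * q ^ ((k:ℕ) * (n - (k:ℕ))) := by ring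
        _ = (qint (((k:ℕ):ℤ) + 1) * qbinom n ((k:ℕ)+1)) * q ^ ((k:ℕ) * (n - (k:ℕ))) := by
            rw [key]
        _ = q ^ (((k:ℕ)+1) * (n - ((k:ℕ)+1))) * qbinom n ((k:ℕ)+1)
              * (q * (qint (((k:ℕ):ℤ) + 1) * q ^ (2*((k:ℕ):ℤ) - (n:ℤ)))) := by
            rw [pow_id2 n k hk]; ring
    · have hB0 : (q • (Emat n * Kmat n)) j k = 0 := by
        simp only [Matrix.smul_apply, Matrix.mul_diagonal, Emat, Kmat, Matrix.of_apply,
          smul_eq_mul]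
        rw [if_neg (fun h : (j:ℕ) = (k:ℕ) + 1 => hc h.symm)]
        ring
      rw [hB0]
      simp [Fmat, if_neg hc]
  · -- K case
    apply sform_adj
    intro j k
    by_cases hc : k = j
    · subst hc
      simp only [Kmat, Kinvmat, Matrix.diagonal_apply_eq]
      rw [bar_zpow bar hbarq]
      rw [show (-(2 * ((k:ℕ):ℤ) - (n:ℤ))) = (n:ℤ) - 2 * ((k:ℕ):ℤ) by ring]
      ring
    · simp only [Kmat, Kinvmat, Matrix.diagonal_apply_ne _ hc,
        Matrix.diagonal_apply_ne _ (fun h => hc h.symm), map_zero, zero_mul, mul_zero]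
  · -- K⁻¹ case
    apply sform_adj
    intro j k
    by_cases hc : k = j
    · subst hc
      simp only [Kmat, Kinvmat, Matrix.diagonal_apply_eq]
      rw [bar_zpow bar hbarq]
      rw [show (-((n:ℤ) - 2 * ((k:ℕ):ℤ))) = 2 * ((k:ℕ):ℤ) - (n:ℤ) by ring]
      ring
    · simp only [Kmat, Kinvmat, Matrix.diagonal_apply_ne _ hc,
        Matrix.diagonal_apply_ne _ (fun h => hc h.symm), map_zero, zero_mul, mul_zero]
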